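/- (i) Let ψ ∈ I_+^W with associated number λ = λ(ψ) > 0, and let (μ_t)_{t∈[0,T]} ⊂ 𝒫_V(ℝ^d) solve the Cauchy problem ∂_tμ_t = L_{μ_t}^*μ_t with μ_0 = ν, with sup_{t∈[0,T]}∫V dμ_t < ∞ and with the defining integral identity holding also for the test function ψ, i.e. ∫ψ dμ_t − ∫ψ dν = ∫₀^t ∫ L_{μ_s}ψ dμ_s ds. Then ∫ψ dμ_t = e^{λ t} ∫ψ dν for all t ∈ [0,T]. (ii) If μ ∈ 𝒫_V(ℝ^d) is a stationary solution of L_μ^*μ = 0 whose stationary identity extends to ψ ∈ I_+^W (i.e. ∫L_μψ dμ = 0), then ∫ψ dμ = 0. (iii) If ∫ψ dν ≠ 0 for some ψ ∈ I_+^W, then for solutions (μ_t)_{t≥0} as in (i) and any stationary solution μ as in (ii), ‖μ_t − μ‖_W ≥ e^{λ t}|∫ψdν| / sup_x(|ψ(x)|/W(x)), so μ_t does not converge to μ in the norm ‖·‖_W. -/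

import Mathlib

open MeasureTheory Real Set Filter Metric
open scoped Topology RealInnerProductSpace NNReal ENNReal

noncomputable section

abbrev Ed (d : ℕ) : Type := EuclideanSpace ℝ (Fin d)

variable {d : ℕ}

/-- Second-order partial derivative `∂_i ∂_j φ (x)`. -/
def hess2 (φ : Ed d → ℝ) (x : Ed d) (i j : Fin d) : ℝ :=
  iteratedFDeriv ℝ 2 φ x ![EuclideanSpace.single i 1, EuclideanSpace.single j 1]

/-- The Kolmogorov operator `L φ = trace (A D²φ) + ⟨B, ∇φ⟩`. -/
def Lop (A : Ed d → Matrix (Fin d) (Fin d) ℝ) (B : Ed d → Ed d)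
    (φ : Ed d → ℝ) (x : Ed d) : ℝ :=
  (∑ i, ∑ j, A x i j * hess2 φ x i j) + ⟪B x, gradient φ x⟫

/-- Membership in `𝒫_V(ℝ^d)`. -/
def memPV (V : Ed d → ℝ) (μ : Measure (Ed d)) : Prop :=
  IsProbabilityMeasure μ ∧ Integrable V μ

/-- `C_0^∞` test functions. -/
def IsTestFun (φ : Ed d → ℝ) : Prop :=
  ContDiff ℝ (⊤ : ℕ∞) φ ∧ HasCompactSupport φ

/-- Weighted total-variation distance `‖W·(μ - ν)‖_{TV}` expressed by duality. -/
def wDist (W : Ed d → ℝ) (μ ν : Measure (Ed d)) : ℝ :=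
  ⨆ f : {f : Ed d → ℝ // Measurable f ∧ ∀ x, |f x| ≤ W x},
    (∫ x, f.1 x ∂μ - ∫ x, f.1 x ∂ν)

/-- Growth bound defining the class of admissible `ψ`. -/
def GrowthW (W ψ : Ed d → ℝ) : Prop :=
  ∃ M : ℝ, ∀ x, |ψ x| + ‖gradient ψ x‖ + ‖iteratedFDeriv ℝ 2 ψ x‖ ≤ M * W x

/-- Stationary solution of `L_μ^*μ = 0`. -/
def IsStationarySol (A : Ed d → Matrix (Fin d) (Fin d) ℝ) (B : Ed d → Ed d)
    (μ : Measure (Ed d)) : Prop :=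
  ∀ φ : Ed d → ℝ, IsTestFun φ → ∫ x, Lop A B φ x ∂μ = 0

/-- Solution of the nonlinear Cauchy problem on `[0,T]`. -/
def IsCauchySolOn (A : Ed d → Matrix (Fin d) (Fin d) ℝ)
    (b : Ed d → Measure (Ed d) → Ed d)
    (ν : Measure (Ed d)) (μ : ℝ → Measure (Ed d)) (T : ℝ) : Prop :=
  μ 0 = ν ∧ ∀ φ : Ed d → ℝ, IsTestFun φ → ∀ t ∈ Set.Icc (0:ℝ) T,
    ∫ x, φ x ∂(μ t) - ∫ x, φ x ∂ν
      = ∫ s in (0:ℝ)..t, ∫ x, Lop A (fun y => b y (μ s)) φ x ∂(μ s)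


lemma key_ode (f : ℝ → ℝ) (lam T : ℝ) (hlam : 0 < lam) (hT : 0 < T)
    (C : ℝ) (hC : ∀ t ∈ Icc (0:ℝ) T, |f t| ≤ C)
    (hid : ∀ t ∈ Icc (0:ℝ) T, f t - f 0 = ∫ s in (0:ℝ)..t, lam * f s) :
    ∀ t ∈ Icc (0:ℝ) T, f t = Real.exp (lam * t) * f 0 := by
  set S : Set ℝ := {t | t ∈ Icc (0:ℝ) T ∧ IntervalIntegrable f volume 0 t} with hS
  have h0S : (0:ℝ) ∈ S := ⟨⟨le_refl 0, hT.le⟩, by simp⟩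
  have hSne : S.Nonempty := ⟨0, h0S⟩
  have hSbdd : BddAbove S := ⟨T, fun t ht => ht.1.2⟩
  set τ := sSup S with hτ
  have hτ0 : 0 ≤ τ := le_csSup hSbdd h0S
  have hτT : τ ≤ T := csSup_le hSne fun t ht => ht.1.2
  have hdown : ∀ t ∈ S, ∀ u, 0 ≤ u → u ≤ t → u ∈ S := by
    rintro t ⟨⟨ht0, htT⟩, hint⟩ u hu0 hut
    refine ⟨⟨hu0, hut.trans htT⟩, hint.mono_set ?_⟩
    rw [uIcc_of_le hu0, uIcc_of_le (hu0.trans hut)]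
    exact Icc_subset_Icc le_rfl hut
  -- Claim A : on [0, t1] with t1 ∈ S, f is the exponential
  have claimA : ∀ t1 ∈ S, ∀ t ∈ Icc (0:ℝ) t1, f t = Real.exp (lam * t) * f 0 := by
    rintro t1 ⟨⟨h10, h1T⟩, hint⟩ t ht
    have hintl : IntervalIntegrable (fun s => lam * f s) volume 0 t1 := hint.const_mul lam
    have hFeq : ∀ u ∈ Icc (0:ℝ) t1, f u = f 0 + ∫ s in (0:ℝ)..u, lam * f s := by
      intro u hu
      have := hid u ⟨hu.1, hu.2.trans h1T⟩
      linarith [this]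
    have hFcont : ContinuousOn (fun u => ∫ s in (0:ℝ)..u, lam * f s) (Icc 0 t1) := by
      have := intervalIntegral.continuousOn_primitive_interval' hintl
        (by rw [uIcc_of_le h10]; exact ⟨le_rfl, h10⟩)
      rwa [uIcc_of_le h10] at this
    have hfcont : ContinuousOn f (Icc 0 t1) :=
      ContinuousOn.congr (continuousOn_const.add hFcont) hFeq
    have hderiv : ∀ u ∈ Ico (0:ℝ) t1,
        HasDerivWithinAt (fun v => Real.exp (-(lam*v)) * f v) 0 (Ici u) u := by
      intro u hu
      haveI : Fact (u ∈ Icc (0:ℝ) t1) := ⟨⟨hu.1, hu.2.le⟩⟩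
      have hmem' : Icc (0:ℝ) t1 ∈ nhdsWithin u (Ici u) := by
        refine mem_nhdsWithin.2 ⟨Iio t1, isOpen_Iio, hu.2, ?_⟩
        rintro x ⟨hx1, hx2⟩
        exact ⟨hu.1.trans hx2, le_of_lt hx1⟩
      have huS : u ∈ S := hdown t1 ⟨⟨h10, h1T⟩, hint⟩ u hu.1 hu.2.le
      have hintu : IntervalIntegrable (fun s => lam * f s) volume 0 u :=
        (huS.2).const_mul lam
      have hlfc : ContinuousOn (fun s => lam * f s) (Icc 0 t1) :=
        continuousOn_const.mul hfcont
      have hmeasAt : StronglyMeasurableAtFilter (fun s => lam * f s)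
          (nhdsWithin u (Icc 0 t1)) :=
        ⟨Icc 0 t1, self_mem_nhdsWithin, hlfc.aestronglyMeasurable measurableSet_Icc⟩
      have hF : HasDerivWithinAt (fun v => ∫ s in (0:ℝ)..v, lam * f s)
          (lam * f u) (Icc 0 t1) u :=
        intervalIntegral.integral_hasDerivWithinAt_right hintu hmeasAt (hlfc u ⟨hu.1, hu.2.le⟩)
      have hf' : HasDerivWithinAt f (lam * f u) (Ici u) u := by
        have h1 : HasDerivWithinAt (fun v => f 0 + ∫ s in (0:ℝ)..v, lam * f s)
            (lam * f u) (Icc 0 t1) u := hF.const_add (f 0)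
        exact ((h1.congr (fun x hx => hFeq x hx) (hFeq u ⟨hu.1, hu.2.le⟩)).mono_of_mem_nhdsWithin hmem')
      have hexp : HasDerivWithinAt (fun v => Real.exp (-(lam*v)))
          (-lam * Real.exp (-(lam*u))) (Ici u) u := by
        have h3 : HasDerivAt (fun v : ℝ => -(lam*v)) (-lam) u := by
          exact (((hasDerivAt_id' u).const_mul lam).neg).congr_deriv (by ring)
        have : HasDerivAt (fun v => Real.exp (-(lam*v))) (Real.exp (-(lam*u)) * (-lam)) u :=
          (Real.hasDerivAt_exp _).comp u h3
        exact (this.hasDerivWithinAt).congr_deriv (by ring)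
      have hmul := hexp.mul hf'
      exact hmul.congr_deriv (by ring)
    have hgcont : ContinuousOn (fun v => Real.exp (-(lam*v)) * f v) (Icc 0 t1) :=
      (Real.continuous_exp.comp (continuous_const.mul continuous_id).neg).continuousOn.mul hfcont
    have hconst := constant_of_has_deriv_right_zero hgcont hderiv t ht
    simp only [mul_zero, neg_zero, Real.exp_zero, one_mul] at hconst
    have hne : Real.exp (-(lam*t)) ≠ 0 := Real.exp_ne_zero _
    field_simp [Real.exp_neg] at hconst ⊢
    have h2 : Real.exp (lam*t) * Real.exp (-(lam*t)) = 1 := by rw [← Real.exp_add]; simp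
    linear_combination (Real.exp (lam*t)) * hconst - f t * h2
  -- exponential form below τ
  have hexpLt : ∀ t, 0 ≤ t → t < τ → f t = Real.exp (lam*t) * f 0 := by
    intro t ht0 htτ
    obtain ⟨t1, ht1S, htt1⟩ := exists_lt_of_lt_csSup hSne htτ
    exact claimA t1 ht1S t ⟨ht0, htt1.le⟩
  -- junk values off S
  have hjunk : ∀ t ∈ Icc (0:ℝ) T, t ∉ S → f t = f 0 := by
    intro t ht htS
    have hni : ¬ IntervalIntegrable (fun s => lam * f s) volume 0 t := by
      intro h
      apply htS
      refine ⟨ht, ?_⟩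
      have := h.const_mul lam⁻¹
      simpa [← mul_assoc, inv_mul_cancel₀ hlam.ne'] using this
    have := hid t ht
    rw [intervalIntegral.integral_undef hni] at this
    linarith
  -- T ∈ S
  have hTS : T ∈ S := by
    set g0 : ℝ → ℝ := fun t => if t < τ then Real.exp (lam*t) * f 0 else f 0 with hg0
    have hg0m : Measurable g0 :=
      Measurable.ite measurableSet_Iio
        ((Real.measurable_exp.comp (measurable_const.mul measurable_id)).mul measurable_const)
        measurable_const
    have hae : f =ᵐ[volume.restrict (Ioc (0:ℝ) T)] g0 := by
      have h1 : ∀ᵐ t ∂(volume.restrict (Ioc (0:ℝ) T)), t ≠ τ := by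
        refine ae_restrict_of_ae ?_
        have : volume ({τ} : Set ℝ) = 0 := measure_singleton τ
        exact (ae_iff.2 (by simpa using this))
      have h2 : ∀ᵐ t ∂(volume.restrict (Ioc (0:ℝ) T)), t ∈ Ioc (0:ℝ) T :=
        ae_restrict_mem measurableSet_Ioc
      filter_upwards [h1, h2] with t hne hmem
      show f t = if t < τ then Real.exp (lam*t) * f 0 else f 0
      rcases lt_trichotomy t τ with hlt | heq | hgt
      · rw [if_pos hlt]
        exact hexpLt t hmem.1.le hlt
      · exact absurd heq hne
      · rw [if_neg (not_lt.2 hgt.le)]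
        refine hjunk t ⟨hmem.1.le, hmem.2⟩ ?_
        intro htS
        exact absurd (le_csSup hSbdd htS) (not_le.2 hgt)
    have hInt : IntegrableOn f (Ioc (0:ℝ) T) volume := by
      refine Integrable.mono' (integrable_const C) (hg0m.aestronglyMeasurable.congr hae.symm) ?_
      filter_upwards [ae_restrict_mem measurableSet_Ioc] with t hmem
      simpa using hC t ⟨hmem.1.le, hmem.2⟩
    exact ⟨⟨hT.le, le_rfl⟩, (intervalIntegrable_iff_integrableOn_Ioc_of_le hT.le).2 hInt⟩
  exact claimA T hTS


/-- **Proposition 3** (behaviour of `I_+^W` functionals): (i) exponential growth of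
`∫ψ dμ_t` along solutions; (ii) vanishing of `∫ψ dμ` for stationary `μ`; (iii) the
resulting obstruction to convergence in `‖·‖_W`. -/
theorem stmt6_subinvariant_functions
    (A : Ed d → Matrix (Fin d) (Fin d) ℝ) (K₁ K₂ : ℝ)
    (hK₁ : 0 < K₁) (hK₂ : 0 < K₂)
    (hAsymm : ∀ x, (A x).IsSymm)
    (hAlow : ∀ x (v : Ed d), K₁⁻¹ * ‖v‖ ^ 2 ≤ ∑ i, ∑ j, A x i j * v i * v j)
    (hAup : ∀ x (v : Ed d), ∑ i, ∑ j, A x i j * v i * v j ≤ K₁ * ‖v‖ ^ 2)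
    (hALip : ∀ x y i j, |A x i j - A y i j| ≤ K₂ * ‖x - y‖)
    (V : Ed d → ℝ) (hV : ContDiff ℝ 2 V) (hV1 : ∀ x, 1 ≤ V x)
    (hVinf : Tendsto V (cocompact (Ed d)) atTop)
    (γ : ℝ) (hγ : γ ∈ Set.Ioc (0:ℝ) (1/2))
    (W : Ed d → ℝ) (hW : W = fun x => V x ^ γ)
    (b : Ed d → Measure (Ed d) → Ed d)
    (hbBorel : ∀ μ, Measurable (fun x => b x μ))
    (hbGrow : ∀ μ : Measure (Ed d), memPV V μ →
      ∃ Cb : ℝ, ∀ x, ‖b x μ‖ ≤ Cb * V x ^ (1 - γ))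
    -- `ψ ∈ I_+^W` with associated number `lam = λ(ψ) > 0`
    (ψ : Ed d → ℝ) (hψC2 : ContDiff ℝ 2 ψ) (hψgrow : GrowthW W ψ)
    (lam : ℝ) (hlam : 0 < lam)
    (hψeq : ∀ μ : Measure (Ed d), memPV V μ →
      ∫ x, Lop A (fun y => b y μ) ψ x ∂μ = lam * ∫ x, ψ x ∂μ) :
    -- (i)
    (∀ T : ℝ, 0 < T → ∀ ν : Measure (Ed d), memPV V ν →
      ∀ μt : ℝ → Measure (Ed d),
        (∀ t ∈ Set.Icc (0:ℝ) T, memPV V (μt t)) →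
        (∃ M : ℝ, ∀ t ∈ Set.Icc (0:ℝ) T, (∫ x, V x ∂(μt t)) ≤ M) →
        IsCauchySolOn A b ν μt T →
        (∀ t ∈ Set.Icc (0:ℝ) T,
          ∫ x, ψ x ∂(μt t) - ∫ x, ψ x ∂ν
            = ∫ s in (0:ℝ)..t, ∫ x, Lop A (fun y => b y (μt s)) ψ x ∂(μt s)) →
        ∀ t ∈ Set.Icc (0:ℝ) T,
          ∫ x, ψ x ∂(μt t) = Real.exp (lam * t) * ∫ x, ψ x ∂ν)
    ∧
    -- (ii)
    (∀ μ : Measure (Ed d), memPV V μ → IsStationarySol A (fun y => b y μ) μ →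
      (∫ x, Lop A (fun y => b y μ) ψ x ∂μ = 0) →
      ∫ x, ψ x ∂μ = 0)
    ∧
    -- (iii)
    (∀ ν : Measure (Ed d), memPV V ν →
      ∀ μt : ℝ → Measure (Ed d),
        (∀ t, 0 ≤ t → memPV V (μt t)) →
        (∀ T : ℝ, 0 < T →
          (∃ M : ℝ, ∀ t ∈ Set.Icc (0:ℝ) T, (∫ x, V x ∂(μt t)) ≤ M) ∧
          IsCauchySolOn A b ν μt T) →
        (∀ t, 0 ≤ t →
          ∫ x, ψ x ∂(μt t) - ∫ x, ψ x ∂ν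
            = ∫ s in (0:ℝ)..t, ∫ x, Lop A (fun y => b y (μt s)) ψ x ∂(μt s)) →
      ∀ μ : Measure (Ed d), memPV V μ → IsStationarySol A (fun y => b y μ) μ →
        (∫ x, Lop A (fun y => b y μ) ψ x ∂μ = 0) →
      (∫ x, ψ x ∂ν) ≠ 0 →
      ∀ M : ℝ, 0 < M → (∀ x, |ψ x| ≤ M * W x) →
        (∀ t, 0 ≤ t →
          Real.exp (lam * t) * |∫ x, ψ x ∂ν| / M ≤ wDist W (μt t) μ) ∧
        ¬ Tendsto (fun t => wDist W (μt t) μ) atTop (nhds 0)) := by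
  have hγ0 : 0 ≤ γ := hγ.1.le
  have hWge1 : ∀ x, 1 ≤ W x := by
    intro x
    rw [hW]
    exact Real.one_le_rpow (hV1 x) hγ0
  have hWpos : ∀ x, 0 < W x := fun x => lt_of_lt_of_le one_pos (hWge1 x)
  have hWleV : ∀ x, W x ≤ V x := by
    intro x
    rw [hW]
    calc V x ^ γ ≤ V x ^ (1:ℝ) :=
          Real.rpow_le_rpow_of_exponent_le (hV1 x) (by linarith [hγ.2])
      _ = V x := Real.rpow_one _
  obtain ⟨Mψ, hMψ⟩ := hψgrow
  have hψb : ∀ x, |ψ x| ≤ Mψ * V x := by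
    intro x
    have h1 : |ψ x| ≤ Mψ * W x := by
      have := hMψ x
      have h2 : (0:ℝ) ≤ ‖gradient ψ x‖ := norm_nonneg _
      have h3 : (0:ℝ) ≤ ‖iteratedFDeriv ℝ 2 ψ x‖ := norm_nonneg _
      linarith
    have hMψ0 : 0 ≤ Mψ := by
      by_contra h
      push_neg at h
      have := h1
      nlinarith [abs_nonneg (ψ x), hWpos x]
    calc |ψ x| ≤ Mψ * W x := h1
      _ ≤ Mψ * V x := mul_le_mul_of_nonneg_left (hWleV x) hMψ0
  have hMψ0 : 0 ≤ Mψ := by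
    by_contra h
    push_neg at h
    have := hψb 0
    nlinarith [abs_nonneg (ψ (0 : Ed d)), lt_of_lt_of_le one_pos (hV1 (0 : Ed d))]
  have hψint : ∀ μ' : Measure (Ed d), memPV V μ' → Integrable ψ μ' := by
    intro μ' hμ'
    haveI := hμ'.1
    refine Integrable.mono' (hμ'.2.const_mul Mψ)
      (hψC2.continuous.measurable.aestronglyMeasurable) ?_
    filter_upwards with x
    simpa [Real.norm_eq_abs] using hψb x
  have hψabs : ∀ μ' : Measure (Ed d), memPV V μ' → |∫ x, ψ x ∂μ'| ≤ Mψ * ∫ x, V x ∂μ' := by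
    intro μ' hμ'
    haveI := hμ'.1
    calc |∫ x, ψ x ∂μ'| ≤ ∫ x, |ψ x| ∂μ' := by
          simpa [Real.norm_eq_abs] using norm_integral_le_integral_norm (μ := μ') ψ
      _ ≤ ∫ x, Mψ * V x ∂μ' :=
          integral_mono (hψint μ' hμ').abs (hμ'.2.const_mul Mψ) (fun x => hψb x)
      _ = Mψ * ∫ x, V x ∂μ' := integral_const_mul _ _
  -- Part (i)
  have part1 : ∀ T : ℝ, 0 < T → ∀ ν : Measure (Ed d), memPV V ν →
      ∀ μt : ℝ → Measure (Ed d),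
        (∀ t ∈ Set.Icc (0:ℝ) T, memPV V (μt t)) →
        (∃ M : ℝ, ∀ t ∈ Set.Icc (0:ℝ) T, (∫ x, V x ∂(μt t)) ≤ M) →
        IsCauchySolOn A b ν μt T →
        (∀ t ∈ Set.Icc (0:ℝ) T,
          ∫ x, ψ x ∂(μt t) - ∫ x, ψ x ∂ν
            = ∫ s in (0:ℝ)..t, ∫ x, Lop A (fun y => b y (μt s)) ψ x ∂(μt s)) →
        ∀ t ∈ Set.Icc (0:ℝ) T,
          ∫ x, ψ x ∂(μt t) = Real.exp (lam * t) * ∫ x, ψ x ∂ν := by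
    rintro T hT ν hν μt hmem ⟨M0, hM0⟩ hsol hψid t ht
    set f : ℝ → ℝ := fun s => ∫ x, ψ x ∂(μt s) with hf
    have hf0 : f 0 = ∫ x, ψ x ∂ν := by rw [hf]; simp [hsol.1]
    have hbound : ∀ s ∈ Set.Icc (0:ℝ) T, |f s| ≤ Mψ * M0 := by
      intro s hs
      have h1 := hψabs (μt s) (hmem s hs)
      have h2 := hM0 s hs
      calc |f s| ≤ Mψ * ∫ x, V x ∂(μt s) := h1
        _ ≤ Mψ * M0 := mul_le_mul_of_nonneg_left h2 hMψ0
    have hid : ∀ s ∈ Set.Icc (0:ℝ) T, f s - f 0 = ∫ u in (0:ℝ)..s, lam * f u := by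
      intro s hs
      rw [hf0]
      rw [hψid s hs]
      refine intervalIntegral.integral_congr ?_
      intro u hu
      rw [uIcc_of_le hs.1] at hu
      exact hψeq (μt u) (hmem u ⟨hu.1, hu.2.trans hs.2⟩)
    have := key_ode f lam T hlam hT (Mψ * M0) hbound hid t ht
    rw [hf0] at this
    exact this
  have part2 : ∀ μ : Measure (Ed d), memPV V μ → IsStationarySol A (fun y => b y μ) μ →
      (∫ x, Lop A (fun y => b y μ) ψ x ∂μ = 0) → ∫ x, ψ x ∂μ = 0 := by
    intro μ hμ _ h0
    have := hψeq μ hμ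
    rw [h0] at this
    exact (mul_eq_zero.mp this.symm).resolve_left hlam.ne'
  refine ⟨part1, part2, ?_⟩
  -- Part (iii)
  intro ν hν μt hmem hsol hψid μ hμ hstat hLμ0 hI M hM hψM
  have hμ0 : ∫ x, ψ x ∂μ = 0 := part2 μ hμ hstat hLμ0
  have hft : ∀ t, 0 ≤ t → ∫ x, ψ x ∂(μt t) = Real.exp (lam * t) * ∫ x, ψ x ∂ν := by
    intro t ht
    obtain ⟨hbd, hcs⟩ := hsol (t+1) (by linarith)
    exact part1 (t+1) (by linarith) ν hν μt (fun s hs => hmem s hs.1) hbd hcs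
      (fun s hs => hψid s hs.1) t ⟨ht, by linarith⟩
  have hWcont : Continuous W := by
    rw [hW]
    exact hV.continuous.rpow_const (fun x => Or.inr hγ0)
  have hWint : ∀ μ' : Measure (Ed d), memPV V μ' → Integrable W μ' := by
    intro μ' hμ'
    refine Integrable.mono' hμ'.2 (hWcont.measurable.aestronglyMeasurable) ?_
    filter_upwards with x
    rw [Real.norm_eq_abs, abs_of_pos (hWpos x)]
    exact hWleV x
  have hintbd : ∀ (g : {f : Ed d → ℝ // Measurable f ∧ ∀ x, |f x| ≤ W x})
      (μ' : Measure (Ed d)), memPV V μ' → |∫ x, g.1 x ∂μ'| ≤ ∫ x, W x ∂μ' := by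
    intro g μ' hμ'
    have hgint : Integrable (fun x => |g.1 x|) μ' := by
      refine Integrable.mono' (hWint μ' hμ') (g.2.1.norm.aestronglyMeasurable) ?_
      filter_upwards with x
      simpa [Real.norm_eq_abs, abs_abs] using g.2.2 x
    calc |∫ x, g.1 x ∂μ'| ≤ ∫ x, |g.1 x| ∂μ' := by
          simpa [Real.norm_eq_abs] using norm_integral_le_integral_norm (μ := μ') g.1
      _ ≤ ∫ x, W x ∂μ' := integral_mono hgint (hWint μ' hμ') (fun x => g.2.2 x)
  have hlow : ∀ t, 0 ≤ t →
      Real.exp (lam * t) * |∫ x, ψ x ∂ν| / M ≤ wDist W (μt t) μ := by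
    intro t ht
    have hμ1 : memPV V (μt t) := hmem t ht
    have hbdd : BddAbove (Set.range fun (g : {f : Ed d → ℝ // Measurable f ∧ ∀ x, |f x| ≤ W x}) =>
        (∫ x, g.1 x ∂(μt t) - ∫ x, g.1 x ∂μ)) := by
      refine ⟨(∫ x, W x ∂(μt t)) + ∫ x, W x ∂μ, ?_⟩
      rintro _ ⟨g, rfl⟩
      have h1 := hintbd g (μt t) hμ1
      have h2 := hintbd g μ hμ
      show (∫ x, g.1 x ∂(μt t)) - ∫ x, g.1 x ∂μ ≤ (∫ x, W x ∂(μt t)) + ∫ x, W x ∂μ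
      have h1' := abs_le.mp h1
      have h2' := abs_le.mp h2
      linarith [h1'.1, h1'.2, h2'.1, h2'.2]
    set I := ∫ x, ψ x ∂ν with hIdef
    set ε : ℝ := if 0 ≤ I then 1 else -1 with hε
    have hεabs : |ε| = 1 := by
      rw [hε]; split <;> simp
    have hεI : ε * I = |I| := by
      rw [hε]
      split
      · rw [abs_of_nonneg (by assumption)]; ring
      · rw [abs_of_neg (by linarith [not_le.mp (by assumption)])]; ring
    set g : Ed d → ℝ := fun x => (ε / M) * ψ x with hg
    have hgmeas : Measurable g := (hψC2.continuous.measurable).const_mul _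
    have hgbd : ∀ x, |g x| ≤ W x := by
      intro x
      rw [hg]
      have : |ε / M * ψ x| = |ψ x| / M := by
        rw [abs_mul, abs_div, hεabs, abs_of_pos hM]
        ring
      rw [this, div_le_iff₀ hM]
      calc |ψ x| ≤ M * W x := hψM x
        _ = W x * M := by ring
    have hle := le_ciSup hbdd (⟨g, hgmeas, hgbd⟩ :
      {f : Ed d → ℝ // Measurable f ∧ ∀ x, |f x| ≤ W x})
    have hval : (∫ x, g x ∂(μt t)) - ∫ x, g x ∂μ = Real.exp (lam * t) * |I| / M := by
      rw [hg]
      rw [show (fun x => ε / M * ψ x) = fun x => ε / M * ψ x from rfl]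
      rw [integral_const_mul, integral_const_mul, hμ0, hft t ht]
      rw [mul_zero, sub_zero]
      rw [← hεI]
      ring
    rw [wDist]
    calc Real.exp (lam * t) * |I| / M = (∫ x, g x ∂(μt t)) - ∫ x, g x ∂μ := hval.symm
      _ ≤ _ := hle
  refine ⟨hlow, ?_⟩
  intro hconv
  have hc0 : 0 < |∫ x, ψ x ∂ν| / M := div_pos (abs_pos.2 hI) hM
  have hev : ∀ᶠ t in atTop, wDist W (μt t) μ < |∫ x, ψ x ∂ν| / M :=
    hconv.eventually (tendsto_id.eventually_lt_const hc0)
  obtain ⟨t, htlt, ht0⟩ := ((hev.and (eventually_ge_atTop (0:ℝ))).exists)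
  have hge := hlow t ht0
  have h1le : 1 ≤ Real.exp (lam * t) := Real.one_le_exp (by positivity)
  have : |∫ x, ψ x ∂ν| / M ≤ Real.exp (lam * t) * |∫ x, ψ x ∂ν| / M := by
    have h2 : |∫ x, ψ x ∂ν| ≤ Real.exp (lam * t) * |∫ x, ψ x ∂ν| :=
      le_mul_of_one_le_left (abs_nonneg _) h1le
    exact (div_le_div_iff_of_pos_right hM).mpr h2
  linarith
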